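/- Let A = (A_1,...,A_q) be a family of endomorphisms of an n-dimensional vector space, σ_u the symmetric functions from det(I + Σ t_α A_α), and T_u the generalized Newton transformation defined by T_0 = I, T_u = σ_u I − Σ_α A_α T_{α♭(u)}. Then for every multi-index u, |u| σ_u = Σ_α tr(A_α T_{α♭(u)}). -/

import Mathlib

open MvPolynomial Matrix

/-- The generalized symmetric function `σ_u(A)`: the coefficient of `t^u` in
`det(I + t₁A₁ + ⋯ + t_qA_q)`. -/
noncomputable def gsigma {n q : ℕ} (A : Fin q → Matrix (Fin n) (Fin n) ℝ)
    (u : Fin q → ℕ) : ℝ :=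
  MvPolynomial.coeff (Finsupp.equivFunOnFinite.symm u)
    ((1 + ∑ α, (MvPolynomial.X α : MvPolynomial (Fin q) ℝ) • (A α).map MvPolynomial.C).det)

/-- Auxiliary recursion (on `|u|`) for the generalized Newton transformation. -/
noncomputable def newtonAux {n q : ℕ} (A : Fin q → Matrix (Fin n) (Fin n) ℝ) :
    ℕ → (Fin q → ℕ) → Matrix (Fin n) (Fin n) ℝ
  | 0, _ => 1
  | k + 1, u =>
      gsigma A u • (1 : Matrix (Fin n) (Fin n) ℝ) -
        ∑ α, if 1 ≤ u α then A α * newtonAux A k (Function.update u α (u α - 1)) else 0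

/-- The generalized Newton transformation `T_u`, defined by `T_0 = I` and
`T_u = σ_u I - ∑_α A_α T_{α♭(u)}`. -/
noncomputable def newton {n q : ℕ} (A : Fin q → Matrix (Fin n) (Fin n) ℝ)
    (u : Fin q → ℕ) : Matrix (Fin n) (Fin n) ℝ :=
  newtonAux A (∑ i, u i) u

section Aux

variable {n q : ℕ}

/-- product rule for pderiv over a finset -/
lemma pderiv_finset_prod (α : Fin q) {ι : Type*} [DecidableEq ι] (s : Finset ι)
    (f : ι → MvPolynomial (Fin q) ℝ) :
    pderiv α (∏ i ∈ s, f i) = ∑ j ∈ s, pderiv α (f j) * ∏ i ∈ s.erase j, f i := by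
  induction s using Finset.induction_on with
  | empty => simp
  | @insert a s ha ih =>
      rw [Finset.prod_insert ha, pderiv_mul, ih, Finset.sum_insert ha, Finset.erase_insert ha,
        Finset.mul_sum]
      congr 1
      refine Finset.sum_congr rfl fun j hj => ?_
      rw [Finset.erase_insert_of_ne (show a ≠ j by rintro rfl; exact ha hj),
        Finset.prod_insert (fun h => ha (Finset.mem_of_mem_erase h))]
      ring

/-- Jacobi's formula -/
lemma pderiv_det (α : Fin q) (M : Matrix (Fin n) (Fin n) (MvPolynomial (Fin q) ℝ)) :
    pderiv α M.det = (M.adjugate * M.map (pderiv α)).trace := by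
  have expand : ∀ (j : Fin n) (b : Fin n → MvPolynomial (Fin q) ℝ) (σ : Equiv.Perm (Fin n)),
      (∏ i, M.updateCol j b (σ i) i) = b (σ j) * ∏ i ∈ Finset.univ.erase j, M (σ i) i := by
    intro j b σ
    rw [← Finset.mul_prod_erase Finset.univ _ (Finset.mem_univ j)]
    congr 1
    · rw [updateCol_apply, if_pos rfl]
    · refine Finset.prod_congr rfl fun i hi => ?_
      rw [updateCol_apply, if_neg (Finset.ne_of_mem_erase hi)]
  have key : ∀ j : Fin n, (M.updateCol j fun i => pderiv α (M i j)).det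
      = ∑ i, M.adjugate j i * pderiv α (M i j) := by
    intro j
    rw [← cramer_apply, cramer_eq_adjugate_mulVec]
    rfl
  have step1 : pderiv α M.det = ∑ j, (M.updateCol j fun i => pderiv α (M i j)).det := by
    have rhs : ∀ j : Fin n, (M.updateCol j fun i => pderiv α (M i j)).det
        = ∑ σ : Equiv.Perm (Fin n), Equiv.Perm.sign σ •
            ((pderiv α (M (σ j) j)) * ∏ i ∈ Finset.univ.erase j, M (σ i) i) := by
      intro j; rw [det_apply]
      exact Finset.sum_congr rfl fun σ _ => by rw [expand]
    rw [Finset.sum_congr rfl fun j _ => rhs j, Finset.sum_comm, det_apply, map_sum]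
    refine Finset.sum_congr rfl fun σ _ => ?_
    rw [Units.smul_def, map_zsmul, pderiv_finset_prod, Finset.smul_sum]
    exact Finset.sum_congr rfl fun j _ => by rw [Units.smul_def]
  rw [step1, Matrix.trace]
  refine Finset.sum_congr rfl fun j _ => ?_
  rw [key j, diag_apply, mul_apply]
  refine Finset.sum_congr rfl fun i _ => ?_
  rw [map_apply]

lemma X_mul_pderiv_monomial (α : Fin q) (s : Fin q →₀ ℕ) (a : ℝ) :
    (X α : MvPolynomial (Fin q) ℝ) * pderiv α (monomial s a) = s α • monomial s a := by
  rw [pderiv_monomial]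
  by_cases h : s α = 0
  · simp [h]
  · rw [X, monomial_mul, one_mul]
    have hs : Finsupp.single α 1 + (s - Finsupp.single α 1) = s := by
      ext β
      rcases eq_or_ne β α with rfl | hβ
      · simp only [Finsupp.add_apply, Finsupp.single_eq_same, Finsupp.tsub_apply]
        omega
      · simp [Finsupp.single_eq_of_ne (Ne.symm hβ), Finsupp.single_apply, hβ]
    rw [hs, smul_monomial]
    congr 1
    rw [nsmul_eq_mul, mul_comm]

lemma coeff_X_mul_pderiv (α : Fin q) (v : Fin q →₀ ℕ) (p : MvPolynomial (Fin q) ℝ) :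
    coeff v (X α * pderiv α p) = (v α : ℝ) * coeff v p := by
  induction p using MvPolynomial.induction_on' with
  | add p r hp hr => rw [map_add, mul_add, coeff_add, hp, hr, coeff_add, mul_add]
  | monomial s a =>
      rw [X_mul_pderiv_monomial, coeff_smul, coeff_monomial]
      rcases eq_or_ne s v with rfl | hsv
      · rw [nsmul_eq_mul]
      · simp [hsv]

end Aux

section Main

variable {n q : ℕ} (A : Fin q → Matrix (Fin n) (Fin n) ℝ)

/-- the matrix `I + ∑ tα Aα` over the polynomial ring -/
noncomputable def Mma : Matrix (Fin n) (Fin n) (MvPolynomial (Fin q) ℝ) :=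
  1 + ∑ α, (X α : MvPolynomial (Fin q) ℝ) • (A α).map C

lemma gsigma_eq (u : Fin q → ℕ) :
    gsigma A u = coeff (Finsupp.equivFunOnFinite.symm u) (Mma A).det := rfl

/-- the matrix of `t^v`-coefficients of the adjugate of `Mma A` -/
noncomputable def adjC (v : Fin q →₀ ℕ) : Matrix (Fin n) (Fin n) ℝ :=
  ((Mma A).adjugate).map (coeff v)

lemma Mma_apply (i j : Fin n) :
    Mma A i j = (if i = j then (1:MvPolynomial (Fin q) ℝ) else 0) + ∑ α, X α * C (A α i j) := by
  simp [Mma, Matrix.add_apply, Matrix.one_apply, Matrix.sum_apply]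

lemma Mma_map_pderiv (α : Fin q) : (Mma A).map (pderiv α) = (A α).map C := by
  ext i j
  rw [map_apply, map_apply, Mma_apply, map_add]
  have h1 : pderiv α (if i = j then (1:MvPolynomial (Fin q) ℝ) else 0) = 0 := by
    split <;> simp
  rw [h1, zero_add, map_sum]
  have h2 : ∀ β : Fin q, pderiv α (X β * C (A β i j))
      = (if β = α then (1:MvPolynomial (Fin q) ℝ) else 0) * C (A β i j) := by
    intro β
    rw [pderiv_mul, pderiv_C, mul_zero, add_zero]
    rcases eq_or_ne β α with rfl | hβ
    · rw [pderiv_X_self, if_pos rfl]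
    · rw [pderiv_X_of_ne hβ, if_neg hβ]
  simp only [h2, ite_mul, one_mul, zero_mul, Finset.sum_ite_eq']
  simp

lemma adjC_zero : adjC A 0 = 1 := by
  have h0 : (Mma A).map (constantCoeff) = 1 := by
    ext i j
    rw [map_apply, Mma_apply, map_add, map_sum]
    rcases eq_or_ne i j with rfl | h
    · simp [Matrix.one_apply, constantCoeff_X]
    · simp [Matrix.one_apply, h, constantCoeff_X]
  show ((Mma A).adjugate).map (coeff 0) = 1
  have : ((Mma A).adjugate).map (coeff 0)
      = (constantCoeff (σ := Fin q) (R := ℝ)).mapMatrix (Mma A).adjugate := rfl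
  rw [this, RingHom.map_adjugate]
  have : (constantCoeff (σ := Fin q) (R := ℝ)).mapMatrix (Mma A) = 1 := h0
  rw [this, adjugate_one]

lemma adjC_rec (v : Fin q →₀ ℕ) :
    adjC A v = coeff v (Mma A).det • (1 : Matrix (Fin n) (Fin n) ℝ)
      - ∑ α, (if 1 ≤ v α then A α * adjC A (v - Finsupp.single α 1) else 0) := by
  have key := mul_adjugate (Mma A)
  ext i j
  have entry : ((Mma A) * (Mma A).adjugate) i j
      = (Mma A).adjugate i j + ∑ α, X α * (((((A α).map C : Matrix (Fin n) (Fin n) (MvPolynomial (Fin q) ℝ)) * (Mma A).adjugate) i j)) := by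
    nth_rewrite 1 [Mma]
    rw [Matrix.add_mul, Matrix.one_mul, Matrix.add_apply, Matrix.sum_mul, Matrix.sum_apply]
    congr 1
    refine Finset.sum_congr rfl fun α _ => ?_
    rw [Matrix.smul_mul, Matrix.smul_apply, smul_eq_mul]
  have base := congrArg (coeff v) (congrFun (congrFun key i) j)
  rw [entry] at base
  rw [coeff_add, coeff_sum] at base
  have hterm : ∀ α : Fin q, coeff v (X α * (((((A α).map C : Matrix (Fin n) (Fin n) (MvPolynomial (Fin q) ℝ)) * (Mma A).adjugate) i j)))
      = (if 1 ≤ v α then (A α * adjC A (v - Finsupp.single α 1)) i j else 0) := by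
    intro α
    rw [coeff_X_mul']
    by_cases h : α ∈ v.support
    · rw [if_pos h, if_pos (by simpa [Finsupp.mem_support_iff, Nat.one_le_iff_ne_zero] using h)]
      rw [mul_apply, mul_apply, coeff_sum]
      refine Finset.sum_congr rfl fun k _ => ?_
      rw [map_apply, coeff_C_mul, adjC, map_apply]
    · rw [if_neg h, if_neg (by simpa [Finsupp.mem_support_iff, Nat.one_le_iff_ne_zero] using h)]
  rw [Finset.sum_congr rfl fun α _ => hterm α] at base
  have hr : coeff v (((Mma A).det • (1:Matrix (Fin n) (Fin n) (MvPolynomial (Fin q) ℝ))) i j)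
      = coeff v (Mma A).det * (1:Matrix (Fin n) (Fin n) ℝ) i j := by
    rcases eq_or_ne i j with rfl | h
    · simp [Matrix.smul_apply, Matrix.one_apply]
    · simp [Matrix.smul_apply, Matrix.one_apply, h]
  rw [hr] at base
  rw [Matrix.sub_apply, Matrix.smul_apply, smul_eq_mul, Matrix.sum_apply]
  have : ∀ α : Fin q, (if 1 ≤ v α then A α * adjC A (v - Finsupp.single α 1) else 0) i j
      = (if 1 ≤ v α then (A α * adjC A (v - Finsupp.single α 1)) i j else 0) := by
    intro α; split <;> simp
  rw [Finset.sum_congr rfl fun α _ => this α]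
  show ((Mma A).adjugate).map (coeff v) i j = _
  rw [map_apply]
  linarith [base]

lemma sum_sub_single (v : Fin q →₀ ℕ) (α : Fin q) (h : 1 ≤ v α) :
    (∑ i, (v - Finsupp.single α 1 : Fin q →₀ ℕ) i) + 1 = ∑ i, v i := by
  have h2 : ∀ i ∈ Finset.univ.erase α, (v - Finsupp.single α 1 : Fin q →₀ ℕ) i = v i := by
    intro i hi
    simp [Finsupp.single_apply, Ne.symm (Finset.ne_of_mem_erase hi)]
  have e1 : ∑ i, (v - Finsupp.single α 1 : Fin q →₀ ℕ) i
      = (v - Finsupp.single α 1 : Fin q →₀ ℕ) α + ∑ i ∈ Finset.univ.erase α, v i := by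
    rw [← Finset.add_sum_erase _ _ (Finset.mem_univ α), Finset.sum_congr rfl h2]
  have e2 : ∑ i, v i = v α + ∑ i ∈ Finset.univ.erase α, v i :=
    (Finset.add_sum_erase _ _ (Finset.mem_univ α)).symm
  have h1 : (v - Finsupp.single α 1 : Fin q →₀ ℕ) α = v α - 1 := by simp
  omega

lemma coe_sub_single (v : Fin q →₀ ℕ) (α : Fin q) :
    ⇑(v - Finsupp.single α 1 : Fin q →₀ ℕ) = Function.update (⇑v) α (v α - 1) := by
  ext β
  rcases eq_or_ne β α with rfl | h
  · simp
  · simp [Function.update_of_ne h, Finsupp.single_apply, Ne.symm h]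

lemma adjC_eq : ∀ (k : ℕ) (v : Fin q →₀ ℕ), (∑ i, v i) = k → adjC A v = newtonAux A k ⇑v := by
  intro k
  induction k with
  | zero =>
      intro v hv
      have : v = 0 := by
        ext i
        exact (Finset.sum_eq_zero_iff).mp hv i (Finset.mem_univ i)
      rw [this, adjC_zero]
      rfl
  | succ k ih =>
      intro v hv
      rw [adjC_rec, newtonAux]
      congr 1
      · rw [gsigma_eq, Finsupp.equivFunOnFinite_symm_coe]
      · refine Finset.sum_congr rfl fun α _ => ?_
        by_cases h : 1 ≤ v α
        · rw [if_pos h, if_pos h,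
            ih (v - Finsupp.single α 1) (by have := sum_sub_single v α h; omega),
            coe_sub_single]
        · rw [if_neg h, if_neg h]

theorem sum_trace_newton' (u : Fin q → ℕ) :
    ((∑ i, u i : ℕ) : ℝ) * gsigma A u =
      ∑ α, if 1 ≤ u α then (A α * newton A (Function.update u α (u α - 1))).trace
        else 0 := by
  classical
  set v : Fin q →₀ ℕ := Finsupp.equivFunOnFinite.symm u with hv
  have hvc : ⇑v = u := rfl
  have main : ∀ α : Fin q, (u α : ℝ) * gsigma A u
      = (if 1 ≤ u α then (A α * newton A (Function.update u α (u α - 1))).trace else 0) := by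
    intro α
    have e1 : (u α : ℝ) * gsigma A u = coeff v (X α * pderiv α (Mma A).det) := by
      rw [coeff_X_mul_pderiv, gsigma_eq, hvc]
    rw [e1, pderiv_det, Mma_map_pderiv, coeff_X_mul']
    by_cases h : α ∈ v.support
    · have h' : 1 ≤ u α := by
        have := Finsupp.mem_support_iff.mp h
        rw [hvc] at this; omega
      rw [if_pos h, if_pos h']
      -- coeff of trace
      rw [Matrix.trace, Matrix.trace, coeff_sum]
      set w : Fin q →₀ ℕ := v - Finsupp.single α 1 with hw
      have hwc : ⇑w = Function.update u α (u α - 1) := by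
        rw [hw, coe_sub_single, hvc]
      have hnewton : adjC A w = newton A (Function.update u α (u α - 1)) := by
        rw [← hwc]
        exact adjC_eq A (∑ i, w i) w rfl
      rw [← hnewton]
      have : ∀ j : Fin n, coeff w ((((Mma A).adjugate * ((A α).map C : Matrix (Fin n) (Fin n) (MvPolynomial (Fin q) ℝ))).diag j))
          = ((adjC A w) * A α).diag j := by
        intro j
        rw [Matrix.diag_apply, Matrix.diag_apply, mul_apply, mul_apply, coeff_sum]
        refine Finset.sum_congr rfl fun k _ => ?_
        rw [map_apply, mul_comm, coeff_C_mul, adjC, map_apply, mul_comm]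
      rw [Finset.sum_congr rfl fun j _ => this j]
      rw [← Matrix.trace, ← Matrix.trace, Matrix.trace_mul_comm]
    · have h' : ¬ 1 ≤ u α := by
        have := Finsupp.notMem_support_iff.mp h
        rw [hvc] at this; omega
      rw [if_neg h, if_neg h']
  rw [Finset.sum_congr rfl fun α _ => (main α).symm]
  rw [← Finset.sum_mul, ← Nat.cast_sum]

end Main

theorem sum_trace_newton {n q : ℕ} (A : Fin q → Matrix (Fin n) (Fin n) ℝ)
    (u : Fin q → ℕ) :
    ((∑ i, u i : ℕ) : ℝ) * gsigma A u =
      ∑ α, if 1 ≤ u α then (A α * newton A (Function.update u α (u α - 1))).trace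
        else 0 := sum_trace_newton' A u
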